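/- Let A, B be n×n complex positive definite matrices. Then for all s, u, t ∈ ℝ: (A ♮_s B) ♮_t (A ♮_u B) = A ♮_{(1−t)s + tu} B. -/

import Mathlib

open scoped ComplexOrder Matrix

noncomputable section

/-- Real power of a (positive definite) matrix via the continuous functional calculus. -/
def mpow {n : ℕ} (A : Matrix (Fin n) (Fin n) ℂ) (t : ℝ) : Matrix (Fin n) (Fin n) ℂ :=
  cfc (fun x : ℝ => x ^ t) A

/-- The matrix logarithm of a (positive definite) matrix via the continuous functional calculus. -/
def mlog {n : ℕ} (A : Matrix (Fin n) (Fin n) ℂ) : Matrix (Fin n) (Fin n) ℂ :=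
  cfc Real.log A

/-- The metric geometric mean `A ♯ₜ B = A^{1/2} (A^{-1/2} B A^{-1/2})^t A^{1/2}`.
`A ♯ B` is `gmean A B (1/2)`. -/
def gmean {n : ℕ} (A B : Matrix (Fin n) (Fin n) ℂ) (t : ℝ) : Matrix (Fin n) (Fin n) ℂ :=
  mpow A (1/2) * mpow (mpow A (-(1/2)) * B * mpow A (-(1/2))) t * mpow A (1/2)

/-- The Loewner order: `A ≤ B` iff `B - A` is positive semidefinite. -/
def LoewnerLE {n : ℕ} (A B : Matrix (Fin n) (Fin n) ℂ) : Prop :=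
  (B - A).PosSemidef

/-- The near order: `A ⪯ B` iff `I ≤ A⁻¹ ♯ B` in the Loewner order. -/
def NearLE {n : ℕ} (A B : Matrix (Fin n) (Fin n) ℂ) : Prop :=
  LoewnerLE 1 (gmean A⁻¹ B (1/2))

/-- The spectral geometric mean `A ♮ₜ B = (A⁻¹ ♯ B)^t A (A⁻¹ ♯ B)^t`. -/
def smean {n : ℕ} (A B : Matrix (Fin n) (Fin n) ℂ) (t : ℝ) : Matrix (Fin n) (Fin n) ℂ :=
  mpow (gmean A⁻¹ B (1/2)) t * A * mpow (gmean A⁻¹ B (1/2)) t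

/-- The Wasserstein mean `A ◇ₜ B = [(1-t)I + t(A⁻¹ ♯ B)] A [(1-t)I + t(A⁻¹ ♯ B)]`. -/
def wmean {n : ℕ} (A B : Matrix (Fin n) (Fin n) ℂ) (t : ℝ) : Matrix (Fin n) (Fin n) ℂ :=
  (((1 - t : ℝ) : ℂ) • (1 : Matrix (Fin n) (Fin n) ℂ) + ((t : ℝ) : ℂ) • gmean A⁻¹ B (1/2)) * A *
    (((1 - t : ℝ) : ℂ) • (1 : Matrix (Fin n) (Fin n) ℂ) + ((t : ℝ) : ℂ) • gmean A⁻¹ B (1/2))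

/-- The arithmetic mean `A ∇ₜ B = (1-t)A + tB`. -/
def amean {n : ℕ} (A B : Matrix (Fin n) (Fin n) ℂ) (t : ℝ) : Matrix (Fin n) (Fin n) ℂ :=
  ((1 - t : ℝ) : ℂ) • A + ((t : ℝ) : ℂ) • B

/-- The matrix absolute value `|X| = (XᴴX)^{1/2}`. -/
def matAbs {n : ℕ} (X : Matrix (Fin n) (Fin n) ℂ) : Matrix (Fin n) (Fin n) ℂ :=
  mpow (Xᴴ * X) (1/2)

/-- The eigenvalues of a Hermitian matrix listed in nonincreasing order:
`eigDesc hA i` is `λ_{i+1}(A)`, so `eigDesc hA 0 = λ₁(A) ≥ eigDesc hA 1 = λ₂(A) ≥ ⋯`. -/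
def eigDesc {n : ℕ} {A : Matrix (Fin n) (Fin n) ℂ} (hA : A.IsHermitian) : Fin n → ℝ :=
  fun i => (hA.eigenvalues ∘ Tuple.sort hA.eigenvalues) i.rev

namespace SmeanAux

variable {n : ℕ}

lemma contOn {A : Matrix (Fin n) (Fin n) ℂ} (f : ℝ → ℝ) :
    ContinuousOn f (spectrum ℝ A) :=
  Matrix.finite_real_spectrum.continuousOn f

lemma spec_pos {A : Matrix (Fin n) (Fin n) ℂ} (hA : A.PosDef) :
    ∀ x ∈ spectrum ℝ A, 0 < x := by
  intro x hx
  rw [Matrix.IsHermitian.spectrum_real_eq_range_eigenvalues hA.1] at hx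
  obtain ⟨i, rfl⟩ := hx
  exact hA.eigenvalues_pos i

lemma posDef_conj {A C : Matrix (Fin n) (Fin n) ℂ} (hA : A.PosDef) (hC : IsUnit C) :
    (Cᴴ * A * C).PosDef := by
  refine Matrix.PosDef.of_dotProduct_mulVec_pos (Matrix.isHermitian_conjTranspose_mul_mul C hA.1) fun x hx => ?_
  have hinj : Function.Injective (C.mulVec) := Matrix.mulVec_injective_iff_isUnit.mpr hC
  have hCx : C *ᵥ x ≠ 0 := (hinj.ne_iff' (Matrix.mulVec_zero C)).2 hx
  simpa only [Matrix.star_mulVec, Matrix.dotProduct_mulVec, Matrix.vecMul_vecMul]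
    using hA.dotProduct_mulVec_pos hCx

lemma cfc_posDef {A : Matrix (Fin n) (Fin n) ℂ} (hA : A.PosDef) {f : ℝ → ℝ}
    (hf : ∀ x ∈ spectrum ℝ A, 0 < f x) : (cfc f A).PosDef := by
  rw [Matrix.IsHermitian.cfc_eq hA.1, Matrix.IsHermitian.cfc]
  have hU : IsUnit (hA.1.eigenvectorUnitary : Matrix (Fin n) (Fin n) ℂ) :=
    ⟨Unitary.toUnits hA.1.eigenvectorUnitary, rfl⟩
  have hD : (Matrix.diagonal (RCLike.ofReal ∘ f ∘ hA.1.eigenvalues) :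
      Matrix (Fin n) (Fin n) ℂ).PosDef := by
    refine Matrix.PosDef.diagonal fun i => ?_
    have : 0 < f (hA.1.eigenvalues i) := by
      refine hf _ ?_
      rw [Matrix.IsHermitian.spectrum_real_eq_range_eigenvalues hA.1]
      exact ⟨i, rfl⟩
    simpa using this
  have h := posDef_conj (C := star (hA.1.eigenvectorUnitary : Matrix (Fin n) (Fin n) ℂ))
    hD hU.star
  simpa only [Unitary.conjStarAlgAut_apply, Matrix.star_eq_conjTranspose, Matrix.conjTranspose_conjTranspose] using h

lemma isSA {A : Matrix (Fin n) (Fin n) ℂ} (hA : A.PosDef) : IsSelfAdjoint A := hA.1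

lemma mpow_posDef {A : Matrix (Fin n) (Fin n) ℂ} (hA : A.PosDef) (t : ℝ) :
    (mpow A t).PosDef :=
  cfc_posDef hA fun x hx => Real.rpow_pos_of_pos (spec_pos hA x hx) t

lemma mpow_add {A : Matrix (Fin n) (Fin n) ℂ} (hA : A.PosDef) (s t : ℝ) :
    mpow A s * mpow A t = mpow A (s + t) := by
  rw [mpow, mpow, mpow, ← cfc_mul _ _ A (contOn _) (contOn _)]
  exact cfc_congr fun x hx => (Real.rpow_add (spec_pos hA x hx) s t).symm

lemma mpow_mpow {A : Matrix (Fin n) (Fin n) ℂ} (hA : A.PosDef) (s t : ℝ) :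
    mpow (mpow A s) t = mpow A (s * t) := by
  rw [mpow, mpow, mpow, ← cfc_comp (fun x : ℝ => x ^ t) (fun x : ℝ => x ^ s) A (isSA hA)
    ((Matrix.finite_real_spectrum.image _).continuousOn _) (contOn _)]
  exact cfc_congr fun x hx => by
    simp only [Function.comp_apply]
    rw [← Real.rpow_mul (spec_pos hA x hx).le]

lemma mpow_zero {A : Matrix (Fin n) (Fin n) ℂ} (hA : A.PosDef) : mpow A 0 = 1 := by
  rw [mpow]
  simp only [Real.rpow_zero]
  exact cfc_const_one ℝ A (isSA hA)

lemma mpow_one {A : Matrix (Fin n) (Fin n) ℂ} (hA : A.PosDef) : mpow A 1 = A := by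
  rw [mpow]
  simp only [Real.rpow_one]
  exact cfc_id' ℝ A (isSA hA)

lemma mpow_neg_one {A : Matrix (Fin n) (Fin n) ℂ} (hA : A.PosDef) : mpow A (-1) = A⁻¹ := by
  have h : mpow A (-1) * A = 1 := by
    nth_rewrite 2 [← mpow_one hA]
    rw [mpow_add hA, show (-1 + 1 : ℝ) = 0 by norm_num]
    exact mpow_zero hA
  exact (Matrix.inv_eq_left_inv h).symm

lemma mpow_inv {A : Matrix (Fin n) (Fin n) ℂ} (hA : A.PosDef) (t : ℝ) :
    mpow A⁻¹ t = mpow A (-t) := by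
  rw [← mpow_neg_one hA, mpow_mpow hA, neg_one_mul]

lemma mpow_sq_half {C : Matrix (Fin n) (Fin n) ℂ} (hC : C.PosDef) :
    mpow (C * C) (1/2) = C := by
  have h : C * C = mpow C (1 + 1) := by
    rw [← mpow_add hC, mpow_one hC]
  rw [h, mpow_mpow hC, show ((1 + 1 : ℝ) * (1/2)) = 1 by norm_num]
  exact mpow_one hC

lemma posDef_conj_herm {A C : Matrix (Fin n) (Fin n) ℂ} (hA : A.PosDef) (hC : C.PosDef) :
    (C * A * C).PosDef := by
  have h := posDef_conj hA hC.isUnit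
  rwa [Matrix.IsHermitian.eq hC.1] at h

lemma gmean_posDef {X Y : Matrix (Fin n) (Fin n) ℂ} (hX : X.PosDef) (hY : Y.PosDef) (t : ℝ) :
    (gmean X Y t).PosDef :=
  posDef_conj_herm (mpow_posDef (posDef_conj_herm hY (mpow_posDef hX (-(1/2)))) t)
    (mpow_posDef hX (1/2))

/-- The Riccati property: if `G X G = Y` with `G` positive definite then
`X⁻¹ ♯ Y = G`. -/
lemma gmean_riccati {X Y G : Matrix (Fin n) (Fin n) ℂ} (hX : X.PosDef) (hG : G.PosDef)
    (h : G * X * G = Y) : gmean X⁻¹ Y (1/2) = G := by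
  have hPQ : mpow X (1/2) * mpow X (-(1/2)) = 1 := by
    rw [mpow_add hX, show ((1/2 : ℝ) + -(1/2)) = 0 by norm_num]; exact mpow_zero hX
  have hQP : mpow X (-(1/2)) * mpow X (1/2) = 1 := by
    rw [mpow_add hX, show ((-(1/2) : ℝ) + 1/2) = 0 by norm_num]; exact mpow_zero hX
  have hXPP : mpow X (1/2) * mpow X (1/2) = X := by
    rw [mpow_add hX, show ((1/2 : ℝ) + 1/2) = 1 by norm_num]; exact mpow_one hX
  have hPGP : (mpow X (1/2) * G * mpow X (1/2)).PosDef :=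
    posDef_conj_herm hG (mpow_posDef hX (1/2))
  unfold gmean
  rw [mpow_inv hX, mpow_inv hX, neg_neg]
  set P := mpow X (1/2) with hP
  set Q := mpow X (-(1/2)) with hQ
  have key : P * Y * P = (P * G * P) * (P * G * P) := by
    rw [← h, ← hXPP]
    noncomm_ring
  rw [key, mpow_sq_half hPGP]
  calc Q * (P * G * P) * Q
      = (Q * P) * G * (P * Q) := by noncomm_ring
    _ = G := by rw [hQP, hPQ, one_mul, mul_one]

end SmeanAux

/-- `(A ♮ₛ B) ♮ₜ (A ♮ᵤ B) = A ♮_{(1−t)s+tu} B` for all real `s, u, t`. -/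
theorem smean_geodesic_property {n : ℕ} (A B : Matrix (Fin n) (Fin n) ℂ)
    (hA : A.PosDef) (hB : B.PosDef) (s u t : ℝ) :
    smean (smean A B s) (smean A B u) t = smean A B ((1 - t) * s + t * u) := by
  open SmeanAux in
  set M : Matrix (Fin n) (Fin n) ℂ := gmean A⁻¹ B (1/2) with hMdef
  have hM : M.PosDef := gmean_posDef hA.inv hB (1/2)
  have hsmean : ∀ r : ℝ, smean A B r = mpow M r * A * mpow M r := fun r => rfl
  have hS : (smean A B s).PosDef := by
    rw [hsmean]; exact posDef_conj_herm hA (mpow_posDef hM s)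
  have hGeq : gmean (smean A B s)⁻¹ (smean A B u) (1/2) = mpow M (u - s) := by
    refine gmean_riccati hS (mpow_posDef hM (u - s)) ?_
    rw [hsmean, hsmean]
    calc mpow M (u - s) * (mpow M s * A * mpow M s) * mpow M (u - s)
        = (mpow M (u - s) * mpow M s) * A * (mpow M s * mpow M (u - s)) := by noncomm_ring
      _ = mpow M u * A * mpow M u := by
          rw [mpow_add hM, mpow_add hM, show u - s + s = u by ring,
            show s + (u - s) = u by ring]
  have hfin : smean (smean A B s) (smean A B u) t
      = mpow (mpow M (u - s)) t * smean A B s * mpow (mpow M (u - s)) t := by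
    rw [smean, hGeq]
  rw [hfin, mpow_mpow hM, hsmean, hsmean]
  calc mpow M ((u - s) * t) * (mpow M s * A * mpow M s) * mpow M ((u - s) * t)
      = (mpow M ((u - s) * t) * mpow M s) * A * (mpow M s * mpow M ((u - s) * t)) := by
        noncomm_ring
    _ = mpow M ((1 - t) * s + t * u) * A * mpow M ((1 - t) * s + t * u) := by
        rw [mpow_add hM, mpow_add hM, show (u - s) * t + s = (1 - t) * s + t * u by ring,
          show s + (u - s) * t = (1 - t) * s + t * u by ring]
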